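/- Let R be a finite non-abelian 2-group such that the commutator subgroup [R,R] has order 2, [R,R] is contained in the center Z(R), and x^2 ∈ [R,R] for every x ∈ R. Then there exists an extraspecial subgroup E of R such that R = E·Z(R), i.e., every element of R is the product of an element of E and an element of Z(R). -/

import Mathlib

open scoped Classical

/-- A slim partial linear space: a nonempty point set, a nonempty collection of
lines each of which is a 3-element set of points, such that any two distinct
points lie in at most one common line. -/
structure SlimPLS (P : Type*) where
  lines : Set (Finset P)
  nonempty_pts : Nonempty P
  nonempty_lines : lines.Nonempty
  three_points : ∀ l ∈ lines, l.card = 3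
  unique_line : ∀ l₁ ∈ lines, ∀ l₂ ∈ lines, ∀ x y : P,
    x ≠ y → x ∈ l₁ → y ∈ l₁ → x ∈ l₂ → y ∈ l₂ → l₁ = l₂

namespace SlimPLS

variable {P : Type*}

/-- Two points are collinear if they are distinct and lie on a common line. -/
def Collinear (S : SlimPLS P) (x y : P) : Prop :=
  x ≠ y ∧ ∃ l ∈ S.lines, x ∈ l ∧ y ∈ l

/-- The collinearity graph of a slim partial linear space. -/
def graph (S : SlimPLS P) : SimpleGraph P where
  Adj x y := S.Collinear x y
  symm := ⟨fun x y h => ⟨Ne.symm h.1, h.2.elim fun l hl => ⟨l, hl.1, hl.2.2, hl.2.1⟩⟩⟩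
  loopless := ⟨fun x h => h.1 rfl⟩

/-- `S` is a generalized quadrangle of order `(2, t)`: it is connected, no point
is collinear with all other points, every point is on exactly `t+1` lines, and
for every point `x` and line `l` with `x ∉ l` there is exactly one point of `l`
collinear with `x`. -/
def IsGQ (S : SlimPLS P) (t : ℕ) : Prop :=
  S.graph.Connected ∧
  (∀ x : P, ∃ y : P, y ≠ x ∧ ¬ S.Collinear x y) ∧
  (∀ x : P, {l | l ∈ S.lines ∧ x ∈ l}.ncard = t + 1) ∧
  (∀ x : P, ∀ l ∈ S.lines, x ∉ l → ∃! y : P, y ∈ l ∧ S.Collinear x y)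

/-- A set of points is an arc if its points are pairwise non-collinear. -/
def IsArc (S : SlimPLS P) (T : Set P) : Prop :=
  ∀ x ∈ T, ∀ y ∈ T, x ≠ y → ¬ S.Collinear x y

/-- `{a,b,c}` is a complete 3-arc: three pairwise distinct, pairwise
non-collinear points not contained in a 4-arc. -/
def Complete3Arc (S : SlimPLS P) (a b c : P) : Prop :=
  a ≠ b ∧ a ≠ c ∧ b ≠ c ∧ S.IsArc {a, b, c} ∧
  ∀ d : P, d ∉ ({a, b, c} : Set P) → ¬ S.IsArc (insert d {a, b, c})

/-- `{a,b,c}` is a complete 3-arc of the subset `Q`: three pairwise distinct,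
pairwise non-collinear points of `Q` not contained in a 4-arc inside `Q`. -/
def Complete3ArcIn (S : SlimPLS P) (Q : Set P) (a b c : P) : Prop :=
  a ∈ Q ∧ b ∈ Q ∧ c ∈ Q ∧ a ≠ b ∧ a ≠ c ∧ b ≠ c ∧ S.IsArc {a, b, c} ∧
  ∀ d ∈ Q, d ∉ ({a, b, c} : Set P) → ¬ S.IsArc (insert d {a, b, c})

/-- `Q` is a sub-generalized-quadrangle of order `(2,t)` of `S`: together with
the lines of `S` contained in it, `Q` is a `(2,t)`-GQ; in particular any line
meeting `Q` in at least two points is contained in `Q`. -/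
def IsSubGQ (S : SlimPLS P) (Q : Set P) (t : ℕ) : Prop :=
  Q.Nonempty ∧
  (∃ l ∈ S.lines, (l : Set P) ⊆ Q) ∧
  (∀ l ∈ S.lines, ∀ x ∈ l, ∀ y ∈ l, x ≠ y → x ∈ Q → y ∈ Q → (l : Set P) ⊆ Q) ∧
  (SimpleGraph.induce Q S.graph).Connected ∧
  (∀ x ∈ Q, ∃ y ∈ Q, y ≠ x ∧ ¬ S.Collinear x y) ∧
  (∀ x ∈ Q, {l | l ∈ S.lines ∧ x ∈ l ∧ (l : Set P) ⊆ Q}.ncard = t + 1) ∧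
  (∀ x ∈ Q, ∀ l ∈ S.lines, (l : Set P) ⊆ Q → x ∉ l → ∃! y : P, y ∈ l ∧ S.Collinear x y)

/-- `S` is a near hexagon: connected of diameter 3, no point collinear with all
other points, and for every point `x` and line `l` there is a unique point of
`l` nearest to `x`. -/
def IsNearHexagon (S : SlimPLS P) : Prop :=
  S.graph.Connected ∧
  (∀ x y : P, S.graph.dist x y ≤ 3) ∧
  (∃ x y : P, S.graph.dist x y = 3) ∧
  (∀ x : P, ∃ y : P, y ≠ x ∧ ¬ S.Collinear x y) ∧
  (∀ x : P, ∀ l ∈ S.lines, ∃! y : P, y ∈ l ∧ ∀ z ∈ l, S.graph.dist x y ≤ S.graph.dist x z)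

/-- `S` is dense: any two points at distance 2 have at least two common
neighbours. -/
def IsDense (S : SlimPLS P) : Prop :=
  ∀ x y : P, S.graph.dist x y = 2 →
    ∃ u v : P, u ≠ v ∧ S.Collinear x u ∧ S.Collinear u y ∧ S.Collinear x v ∧ S.Collinear v y

/-- `Q` is a quad: a convex subset of diameter 2 in which no point is collinear
with all other points of `Q`. -/
def IsQuad (S : SlimPLS P) (Q : Set P) : Prop :=
  (∀ u ∈ Q, ∀ v ∈ Q, ∀ w : P,
      S.graph.dist u w + S.graph.dist w v = S.graph.dist u v → w ∈ Q) ∧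
  (∀ u ∈ Q, ∀ v ∈ Q, S.graph.dist u v ≤ 2) ∧
  (∃ u ∈ Q, ∃ v ∈ Q, S.graph.dist u v = 2) ∧
  (∀ u ∈ Q, ∃ v ∈ Q, v ≠ u ∧ ¬ S.Collinear u v)

/-- A quad `Q` is of type `(2, t₂)` if every point of `Q` lies on exactly
`t₂ + 1` lines contained in `Q`. -/
def QuadType (S : SlimPLS P) (Q : Set P) (t₂ : ℕ) : Prop :=
  ∀ x ∈ Q, {l | l ∈ S.lines ∧ x ∈ l ∧ (l : Set P) ⊆ Q}.ncard = t₂ + 1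

/-- The point-quad pair `(x, Q)` is classical: there is a unique point `y ∈ Q`
nearest to `x`, with `d(x,z) = d(x,y) + d(y,z)` for all `z ∈ Q`. -/
def IsClassicalPair (S : SlimPLS P) (x : P) (Q : Set P) : Prop :=
  ∃! y : P, y ∈ Q ∧ ∀ z ∈ Q, S.graph.dist x z = S.graph.dist x y + S.graph.dist y z

/-- A quad is classical (big) if every point-quad pair with it is classical. -/
def IsClassicalQuad (S : SlimPLS P) (Q : Set P) : Prop :=
  ∀ x : P, S.IsClassicalPair x Q

/-- A subspace: any line containing two of its points is contained in it. -/
def IsSubspace (S : SlimPLS P) (X : Set P) : Prop :=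
  ∀ l ∈ S.lines, ∀ x ∈ l, ∀ y ∈ l, x ≠ y → x ∈ X → y ∈ X → (l : Set P) ⊆ X

/-- The subspace generated by a set of points. -/
def subspaceGen (S : SlimPLS P) (A : Set P) : Set P :=
  ⋂₀ {X | S.IsSubspace X ∧ A ⊆ X}

/-- `NPdim S` is the rank over `F₂` of the distance-3 adjacency matrix. -/
noncomputable def NPdim [Fintype P] (S : SlimPLS P) : ℕ :=
  Matrix.rank (Matrix.of fun x y : P => if S.graph.dist x y = 3 then (1 : ZMod 2) else 0)

/-- `dimV S` is the dimension of the universal representation module of `S`: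
the free `F₂`-vector space on the points modulo the span of the elements
`v_x + v_y + v_z` for the lines `{x,y,z}`. -/
noncomputable def dimV (S : SlimPLS P) : ℕ :=
  Module.finrank (ZMod 2)
    ((P →₀ ZMod 2) ⧸ Submodule.span (ZMod 2)
      {f : P →₀ ZMod 2 | ∃ l ∈ S.lines, f = ∑ x ∈ l, Finsupp.single x 1})

end SlimPLS

/-- A representation of a slim partial linear space `S`: an assignment of an
order-2 element `r x` of `R` to each point `x`, such that the images generate
`R` and for every line `{x,y,z}` the set `{1, r x, r y, r z}` is a Klein four
subgroup (`r x * r y = r z` for the three pairwise distinct points of a line). -/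
structure SlimPLS.Rep {P : Type*} (S : SlimPLS P) (R : Type*) [Group R] where
  r : P → R
  order_two : ∀ x : P, orderOf (r x) = 2
  gen : Subgroup.closure (Set.range r) = ⊤
  line_rel : ∀ l ∈ S.lines, ∀ x ∈ l, ∀ y ∈ l, ∀ z ∈ l,
    x ≠ y → x ≠ z → y ≠ z → r x * r y = r z

/-- A finite 2-group is extraspecial if its Frattini subgroup, commutator
subgroup and center coincide and have order 2. -/
def IsExtraspecial (G : Type*) [Group G] : Prop :=
  Finite G ∧ IsPGroup 2 G ∧ frattini G = commutator G ∧
    commutator G = Subgroup.center G ∧ Nat.card (Subgroup.center G) = 2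

open scoped commutatorElement

section AuxExtraspecial

variable {G : Type*} [Group G]

/-- Multiplying on the right of the first argument by a central element
does not change a commutator. -/
lemma aux_comm_central_left (u z v : G) (hz : ∀ x : G, z * x = x * z) :
    ⁅u * z, v⁆ = ⁅u, v⁆ := by
  have h1 : ⁅u * z, v⁆ = u * (z * v) * (z⁻¹ * u⁻¹ * v⁻¹) := by
    rw [commutatorElement_def]; group
  rw [h1, hz v, commutatorElement_def]; group

/-- Multiplying on the right of the second argument by a central element
does not change a commutator. -/
lemma aux_comm_central_right (u v z : G) (hz : ∀ x : G, z * x = x * z) :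
    ⁅u, v * z⁆ = ⁅u, v⁆ := by
  have h1 : ⁅u, v * z⁆ = u * v * (z * u⁻¹) * (z⁻¹ * v⁻¹) := by
    rw [commutatorElement_def]; group
  rw [h1, hz u⁻¹, commutatorElement_def]; group

/-- Given a subgroup `M` and an element `x` whose square and whose commutators
with everything lie in `M`, the union `M ∪ Mx` is a subgroup. -/
lemma aux_extend (M : Subgroup G) (x : G) (hx2 : x ^ 2 ∈ M)
    (hxc : ∀ y : G, ⁅x, y⁆ ∈ M) (hxci : ∀ y : G, ⁅x⁻¹, y⁆ ∈ M) :
    ∃ K : Subgroup G, ∀ y : G, y ∈ K ↔ (y ∈ M ∨ y * x⁻¹ ∈ M) := by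
  refine ⟨{ carrier := {y | y ∈ M ∨ y * x⁻¹ ∈ M},
            one_mem' := Or.inl M.one_mem,
            mul_mem' := ?_, inv_mem' := ?_ }, fun y => Iff.rfl⟩
  · rintro p q (hp | hp) (hq | hq)
    · exact Or.inl (M.mul_mem hp hq)
    · refine Or.inr ?_
      have h : p * q * x⁻¹ = p * (q * x⁻¹) := by group
      rw [h]; exact M.mul_mem hp hq
    · refine Or.inr ?_
      have h : p * q * x⁻¹ = (p * x⁻¹) * ⁅x, q⁆ * q := by
        rw [commutatorElement_def]; group
      rw [h]; exact M.mul_mem (M.mul_mem hp (hxc q)) hq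
    · refine Or.inl ?_
      have h : p * q = (p * x⁻¹) * ⁅x, q⁆ * (q * x⁻¹) * x ^ 2 := by
        rw [commutatorElement_def]; group
      rw [h]; exact M.mul_mem (M.mul_mem (M.mul_mem hp (hxc q)) hq) hx2
  · rintro p (hp | hp)
    · exact Or.inl (M.inv_mem hp)
    · refine Or.inr ?_
      have h : p⁻¹ * x⁻¹ = ⁅x⁻¹, (p * x⁻¹)⁻¹⁆ * (p * x⁻¹)⁻¹ * (x ^ 2)⁻¹ := by
        rw [commutatorElement_def]; group
      rw [h]; exact M.mul_mem (M.mul_mem (hxci _) (M.inv_mem hp)) (M.inv_mem hx2)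

lemma aux_card_lt [Finite G] {A B : Subgroup G} (h : A ≤ B) {x : G}
    (hxB : x ∈ B) (hxA : x ∉ A) : Nat.card A < Nat.card B := by
  rw [← SetLike.coe_sort_coe A, ← SetLike.coe_sort_coe B, Nat.card_coe_set_eq, Nat.card_coe_set_eq]
  refine Set.ncard_lt_ncard ?_ (Set.toFinite _)
  exact ⟨h, fun hc => hxA (hc hxB)⟩

/-- Key maximality argument: in a finite group in which all squares and all
commutators lie in `{1, c}`, any element `g ∉ {1, c}` is avoided by a
subgroup of index two containing `c`. -/
lemma aux_maximal [Finite G] (c : G)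
    (hsq : ∀ x : G, x ^ 2 = 1 ∨ x ^ 2 = c)
    (hcm : ∀ x y : G, ⁅x, y⁆ = 1 ∨ ⁅x, y⁆ = c)
    (g : G) (hg1 : g ≠ 1) (hgc : g ≠ c) :
    ∃ M : Subgroup G, c ∈ M ∧ g ∉ M ∧ ∀ x : G, x ∈ M ∨ x * g⁻¹ ∈ M := by
  have hc2 : c ^ 2 = 1 := by
    rcases hsq c with h | h
    · exact h
    · have hc : c = 1 := by
        rw [pow_two] at h
        calc c = c * c * c⁻¹ := by group
          _ = c * c⁻¹ := by rw [h]
          _ = 1 := by group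
      rw [hc]; group
  have hzc : ∀ y ∈ Subgroup.zpowers c, y = 1 ∨ y = c := by
    rintro y ⟨n, rfl⟩
    have h2 : c ^ (2:ℤ) = 1 := by exact_mod_cast hc2
    rcases Int.even_or_odd n with ⟨k, hk⟩ | ⟨k, hk⟩
    · left
      calc c ^ n = (c ^ (2:ℤ)) ^ k := by rw [← zpow_mul, hk]; ring_nf
        _ = 1 := by rw [h2, one_zpow]
    · right
      calc c ^ n = (c ^ (2:ℤ)) ^ k * c := by
            rw [← zpow_mul, ← zpow_add_one, hk]
        _ = c := by rw [h2, one_zpow, one_mul]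
  haveI : Finite (Subgroup G) :=
    Finite.of_injective (fun H : Subgroup G => (H : Set G)) SetLike.coe_injective
  set T : Set (Subgroup G) := {M | c ∈ M ∧ g ∉ M} with hT
  have hTne : T.Nonempty := by
    refine ⟨Subgroup.zpowers c, Subgroup.mem_zpowers c, fun hg => ?_⟩
    rcases hzc g hg with h | h
    · exact hg1 h
    · exact hgc h
  obtain ⟨M, hMT, hmax⟩ := Set.exists_max_image T (fun H : Subgroup G => Nat.card H)
    (Set.toFinite T) hTne
  have key : ∀ x : G, x ∉ M → g * x⁻¹ ∈ M := by
    intro x hx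
    have hx2 : x ^ 2 ∈ M := by
      rcases hsq x with h | h <;> rw [h]
      · exact M.one_mem
      · exact hMT.1
    have hxc : ∀ y : G, ⁅x, y⁆ ∈ M := by
      intro y; rcases hcm x y with h | h <;> rw [h]
      · exact M.one_mem
      · exact hMT.1
    have hxci : ∀ y : G, ⁅x⁻¹, y⁆ ∈ M := by
      intro y; rcases hcm x⁻¹ y with h | h <;> rw [h]
      · exact M.one_mem
      · exact hMT.1
    obtain ⟨K, hK⟩ := aux_extend M x hx2 hxc hxci
    have hMK : M ≤ K := fun y hy => (hK y).2 (Or.inl hy)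
    have hxK : x ∈ K := (hK x).2 (Or.inr (by rw [mul_inv_cancel]; exact M.one_mem))
    have hcard : Nat.card M < Nat.card K := aux_card_lt hMK hxK hx
    have hKT : K ∉ T := fun hKT => absurd (hmax K hKT) (not_le.2 hcard)
    have hcK : c ∈ K := hMK hMT.1
    have hgK : g ∈ K := by
      by_contra hg
      exact hKT ⟨hcK, hg⟩
    rcases (hK g).1 hgK with h | h
    · exact absurd h hMT.2
    · exact h
  refine ⟨M, hMT.1, hMT.2, fun x => ?_⟩
  by_cases hx : x ∈ M
  · exact Or.inl hx
  · refine Or.inr ?_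
    have h := key x hx
    have heq : x * g⁻¹ = (g * x⁻¹)⁻¹ := by group
    rw [heq]; exact M.inv_mem h

/-- A finite group in which all squares and commutators lie in `{1, c}` with
`c ≠ 1` central, some commutator equals `c`, and whose centre is `{1, c}`,
is extraspecial. -/
lemma aux_extraspecial [Finite G] (c : G) (hc1 : c ≠ 1)
    (hcent : ∀ x : G, c * x = x * c)
    (hsq : ∀ x : G, x ^ 2 = 1 ∨ x ^ 2 = c)
    (hcm : ∀ x y : G, ⁅x, y⁆ = 1 ∨ ⁅x, y⁆ = c)
    (hab : ∃ a b : G, ⁅a, b⁆ = c)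
    (hZ : ∀ z : G, (∀ x : G, z * x = x * z) → z = 1 ∨ z = c) :
    IsExtraspecial G := by
  have hc2 : c ^ 2 = 1 := by
    rcases hsq c with h | h
    · exact h
    · exfalso; apply hc1
      rw [pow_two] at h
      calc c = c * c * c⁻¹ := by group
        _ = c * c⁻¹ := by rw [h]
        _ = 1 := by group
  have hcommG : commutator G = Subgroup.zpowers c := by
    apply le_antisymm
    · rw [commutator_def, Subgroup.commutator_le]
      intro g₁ _ g₂ _
      rcases hcm g₁ g₂ with h | h <;> rw [h]
      · exact Subgroup.one_mem _
      · exact Subgroup.mem_zpowers c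
    · rw [Subgroup.zpowers_le]
      obtain ⟨a, b, hab⟩ := hab
      rw [commutator_def, ← hab]
      exact Subgroup.commutator_mem_commutator (Subgroup.mem_top a) (Subgroup.mem_top b)
  have hcenG : Subgroup.center G = Subgroup.zpowers c := by
    apply le_antisymm
    · intro z hz
      rcases hZ z (fun x => ((Subgroup.mem_center_iff.1 hz) x).symm) with h | h
      · rw [h]; exact Subgroup.one_mem _
      · rw [h]; exact Subgroup.mem_zpowers c
    · rw [Subgroup.zpowers_le]
      exact Subgroup.mem_center_iff.2 (fun g => (hcent g).symm)
  have hcardc : Nat.card (Subgroup.zpowers c) = 2 := by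
    rw [Nat.card_zpowers]
    exact orderOf_eq_prime hc2 hc1
  have hfrat : frattini G = Subgroup.zpowers c := by
    apply le_antisymm
    · intro x hx
      by_contra hxz
      have hx1 : x ≠ 1 := fun h => hxz (h ▸ Subgroup.one_mem _)
      have hxc : x ≠ c := fun h => hxz (h ▸ Subgroup.mem_zpowers c)
      obtain ⟨M, hcM, hgM, hM⟩ := aux_maximal c hsq hcm x hx1 hxc
      have hcoatom : IsCoatom M := by
        constructor
        · intro h; rw [h] at hgM; exact hgM (Subgroup.mem_top x)
        · intro K hMK
          rw [eq_top_iff]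
          intro y _
          obtain ⟨w, hwK, hwM⟩ := SetLike.exists_of_lt hMK
          have hxK : x ∈ K := by
            rcases hM w with h | h
            · exact absurd h hwM
            · have heq : x = (w * x⁻¹)⁻¹ * w := by group
              rw [heq]; exact K.mul_mem (K.inv_mem (hMK.le h)) hwK
          rcases hM y with h | h
          · exact hMK.le h
          · have heq : y = (y * x⁻¹) * x := by group
            rw [heq]; exact K.mul_mem (hMK.le h) hxK
      exact hgM (frattini_le_coatom hcoatom hx)
    · rw [Subgroup.zpowers_le]
      have hall : ∀ M : Subgroup G, IsCoatom M → c ∈ M := by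
        intro M hM
        by_contra hcM
        obtain ⟨K, hK⟩ := aux_extend M c (by rw [hc2]; exact M.one_mem)
          (fun y => by
            rw [commutatorElement_eq_one_iff_mul_comm.2 (hcent y)]
            exact M.one_mem)
          (fun y => by
            have hcom : Commute c y := hcent y
            rw [commutatorElement_eq_one_iff_mul_comm.2 hcom.inv_left.eq]
            exact M.one_mem)
        have hMK : M < K := by
          refine lt_of_le_of_ne (fun y hy => (hK y).2 (Or.inl hy)) (fun h => hcM ?_)
          have : c ∈ K := (hK c).2 (Or.inr (by rw [mul_inv_cancel]; exact M.one_mem))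
          rw [← h] at this
          exact this
        have hKtop : K = ⊤ := hM.2 K hMK
        have hdec : ∀ y : G, ∃ m ∈ M, y = m ∨ y = m * c := by
          intro y
          have hy : y ∈ K := hKtop ▸ Subgroup.mem_top y
          rcases (hK y).1 hy with h | h
          · exact ⟨y, h, Or.inl rfl⟩
          · exact ⟨y * c⁻¹, h, Or.inr (by group)⟩
        obtain ⟨a, b, habc⟩ := hab
        obtain ⟨m, hm, ha⟩ := hdec a
        obtain ⟨m', hm', hb⟩ := hdec b
        have hcomm_eq : ⁅a, b⁆ = ⁅m, m'⁆ := by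
          rcases ha with rfl | rfl <;> rcases hb with rfl | rfl
          · rfl
          · rw [aux_comm_central_right _ _ _ hcent]
          · rw [aux_comm_central_left _ _ _ hcent]
          · rw [aux_comm_central_left _ _ _ hcent, aux_comm_central_right _ _ _ hcent]
        apply hcM
        rw [← habc, hcomm_eq, commutatorElement_def]
        exact M.mul_mem (M.mul_mem (M.mul_mem hm hm') (M.inv_mem hm)) (M.inv_mem hm')
      show c ∈ frattini G
      unfold frattini Order.radical
      exact Subgroup.mem_iInf.2 fun M => Subgroup.mem_iInf.2 fun hM => hall M hM
  refine ⟨inferInstance, ?_, ?_, ?_, ?_⟩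
  · intro g
    refine ⟨2, ?_⟩
    have h4 : g ^ (2:ℕ) ^ 2 = (g ^ 2) ^ 2 := by rw [← pow_mul]; norm_num
    rw [h4]
    rcases hsq g with h | h <;> rw [h]
    · exact one_pow 2
    · exact hc2
  · rw [hfrat, hcommG]
  · rw [hcommG, hcenG]
  · rw [hcenG]; exact hcardc

end AuxExtraspecial

/-- A finite non-abelian 2-group `R` with `|[R,R]| = 2`,
`[R,R] ≤ Z(R)` and `x² ∈ [R,R]` for all `x` is a central product of an
extraspecial subgroup `E` with its center: `R = E·Z(R)`. -/
theorem central_product_extraspecial {R : Type*} [Group R] [Finite R]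
    (hna : ¬ ∀ a b : R, a * b = b * a) (h2 : IsPGroup 2 R)
    (hcomm : Nat.card (commutator R) = 2)
    (hcz : commutator R ≤ Subgroup.center R)
    (hsq : ∀ x : R, x ^ 2 ∈ commutator R) :
    ∃ E : Subgroup R, IsExtraspecial E ∧
      ∀ x : R, ∃ e ∈ E, ∃ z ∈ Subgroup.center R, x = e * z := by
  
  classical
  -- Extract the unique nontrivial element `c` of the commutator subgroup.
  obtain ⟨u, v, huv, huniv⟩ := Nat.card_eq_two_iff.1 hcomm
  have htwo : ∀ w : ↥(commutator R), w = u ∨ w = v := by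
    intro w
    have hw : w ∈ ({u, v} : Set ↥(commutator R)) := by rw [huniv]; trivial
    simpa using hw
  obtain ⟨c0, hc01, hc0⟩ :
      ∃ c0 : ↥(commutator R), c0 ≠ 1 ∧ ∀ w : ↥(commutator R), w = 1 ∨ w = c0 := by
    by_cases hu : u = (1 : ↥(commutator R))
    · refine ⟨v, fun h => huv (hu.trans h.symm), fun w => ?_⟩
      rcases htwo w with h | h
      · exact Or.inl (h.trans hu)
      · exact Or.inr h
    · rcases htwo 1 with h | h
      · exact absurd h.symm hu
      · refine ⟨u, hu, fun w => ?_⟩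
        rcases htwo w with h' | h'
        · exact Or.inr h'
        · exact Or.inl (h'.trans h.symm)
  set c : R := (c0 : R) with hc
  have hcR : c ∈ commutator R := c0.2
  have hc1 : c ≠ 1 := fun h => hc01 (Subtype.ext h)
  have hmem : ∀ w ∈ commutator R, w = 1 ∨ w = c := by
    intro w hw
    rcases hc0 ⟨w, hw⟩ with h | h
    · exact Or.inl (congrArg Subtype.val h)
    · exact Or.inr (congrArg Subtype.val h)
  have hcent_c : ∀ x : R, c * x = x * c := fun x =>
    ((Subgroup.mem_center_iff.1 (hcz hcR)) x).symm
  have hsqR : ∀ x : R, x ^ 2 = 1 ∨ x ^ 2 = c := fun x => hmem _ (hsq x)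
  have hmemcomm : ∀ x y : R, ⁅x, y⁆ ∈ commutator R := fun x y =>
    (commutator_def R) ▸
      Subgroup.commutator_mem_commutator (Subgroup.mem_top x) (Subgroup.mem_top y)
  have hcmR : ∀ x y : R, ⁅x, y⁆ = 1 ∨ ⁅x, y⁆ = c := fun x y => hmem _ (hmemcomm x y)
  -- Choose a subgroup `E` of minimal cardinality with `c ∈ E` and `R = E·Z(R)`.
  haveI : Finite (Subgroup R) :=
    Finite.of_injective (fun H : Subgroup R => (H : Set R)) SetLike.coe_injective
  set Sset : Set (Subgroup R) :=
    {E | c ∈ E ∧ ∀ x : R, ∃ e ∈ E, ∃ z ∈ Subgroup.center R, x = e * z} with hSset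
  have htop : (⊤ : Subgroup R) ∈ Sset :=
    ⟨Subgroup.mem_top c, fun x =>
      ⟨x, Subgroup.mem_top x, 1, Subgroup.one_mem _, (mul_one x).symm⟩⟩
  obtain ⟨E, hES, hmin⟩ := Set.exists_min_image Sset (fun H : Subgroup R => Nat.card H)
    (Set.toFinite _) ⟨⊤, htop⟩
  refine ⟨E, ?_, hES.2⟩
  -- Transfer the hypotheses to the group `E`.
  set c' : ↥E := ⟨c, hES.1⟩ with hc'
  have hc'1 : c' ≠ 1 := fun h => hc1 (congrArg Subtype.val h)
  have hcentE : ∀ x : ↥E, c' * x = x * c' := fun x => Subtype.ext (hcent_c x)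
  have hcoe : ∀ x y : ↥E, ((⁅x, y⁆ : ↥E) : R) = ⁅(x : R), (y : R)⁆ := by
    intro x y
    rw [commutatorElement_def, commutatorElement_def]
    push_cast
    rfl
  have hsqE : ∀ x : ↥E, x ^ 2 = 1 ∨ x ^ 2 = c' := by
    intro x
    rcases hsqR (x : R) with h | h
    · exact Or.inl (Subtype.ext (by push_cast; exact h))
    · exact Or.inr (Subtype.ext (by push_cast; exact h))
  have hcmE : ∀ x y : ↥E, ⁅x, y⁆ = 1 ∨ ⁅x, y⁆ = c' := by
    intro x y
    rcases hcmR (x : R) (y : R) with h | h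
    · exact Or.inl (Subtype.ext (by rw [hcoe]; exact h))
    · exact Or.inr (Subtype.ext (by rw [hcoe]; exact h))
  have habE : ∃ a b : ↥E, ⁅a, b⁆ = c' := by
    push_neg at hna
    obtain ⟨a, b, hab⟩ := hna
    obtain ⟨e, he, z, hz, rfl⟩ := hES.2 a
    obtain ⟨e', he', z', hz', rfl⟩ := hES.2 b
    have hzc : ∀ x : R, z * x = x * z := fun x => (Subgroup.mem_center_iff.1 hz x).symm
    have hz'c : ∀ x : R, z' * x = x * z' := fun x => (Subgroup.mem_center_iff.1 hz' x).symm
    have h1 : ⁅e * z, e' * z'⁆ = ⁅e, e'⁆ := by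
      rw [aux_comm_central_left _ _ _ hzc, aux_comm_central_right _ _ _ hz'c]
    have hne1 : ⁅e, e'⁆ ≠ 1 := by
      rw [← h1]
      exact fun h => hab (commutatorElement_eq_one_iff_mul_comm.1 h)
    rcases hcmR e e' with h | h
    · exact absurd h hne1
    · exact ⟨⟨e, he⟩, ⟨e', he'⟩, Subtype.ext (by rw [hcoe]; exact h)⟩
  have hZE : ∀ z : ↥E, (∀ x : ↥E, z * x = x * z) → z = 1 ∨ z = c' := by
    intro z hz
    by_contra hcon
    push_neg at hcon
    obtain ⟨hz1, hzc'⟩ := hcon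
    have hzR : (z : R) ∈ Subgroup.center R := by
      rw [Subgroup.mem_center_iff]
      intro g
      obtain ⟨e, he, w, hw, rfl⟩ := hES.2 g
      have h1 : (z : R) * e = e * (z : R) := congrArg Subtype.val (hz ⟨e, he⟩)
      have h2 : (z : R) * w = w * (z : R) := Subgroup.mem_center_iff.1 hw (z : R)
      show e * w * (z : R) = (z : R) * (e * w)
      rw [mul_assoc, ← h2, ← mul_assoc, ← h1, mul_assoc]
    obtain ⟨M, hc'M, hzM, hM⟩ := aux_maximal c' hsqE hcmE z hz1 hzc'
    set F : Subgroup R := M.map E.subtype with hF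
    have hFE : F ≤ E := by rw [hF]; exact Subgroup.map_subtype_le M
    have hcF : c ∈ F := ⟨c', hc'M, rfl⟩
    have hFdec : ∀ x : R, ∃ e ∈ F, ∃ w ∈ Subgroup.center R, x = e * w := by
      intro x
      obtain ⟨e, he, w, hw, rfl⟩ := hES.2 x
      rcases hM ⟨e, he⟩ with h | h
      · exact ⟨e, ⟨⟨e, he⟩, h, rfl⟩, w, hw, rfl⟩
      · refine ⟨e * (z : R)⁻¹, ⟨⟨e, he⟩ * z⁻¹, h, rfl⟩, (z : R) * w,
          Subgroup.mul_mem _ hzR hw, by group⟩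
    have hFS : F ∈ Sset := ⟨hcF, hFdec⟩
    have hzF : (z : R) ∉ F := by
      rintro ⟨m, hm, hme⟩
      exact hzM (by rwa [show m = z from Subtype.ext hme] at hm)
    have hlt : Nat.card F < Nat.card E := aux_card_lt hFE z.2 hzF
    exact absurd (hmin F hFS) (not_le.2 hlt)
  exact aux_extraspecial c' hc'1 hcentE hsqE hcmE habE hZE
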